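/- Let λ₁ = (rows (0,1,0,-1),(0,0,-1,1),(-1,0,0,1),(0,1,0,0)), λ₂ = (rows (0,0,-1,0),(-1,-1,-1,2),(1,0,0,0),(0,-1,-1,1)), and λ₂^τ = (rows (0,1,0,0),(-1,0,0,0),(-1,-1,-1,2),(-1,0,-1,1)) in GL(4,ℤ). There is no invertible 4×4 matrix P over the field ℤ/2ℤ such that P·λ̄₁ = λ̄₁·P and P·λ̄₂ = λ̄₂^τ·P, where bars denote reduction of entries modulo 2. Consequently there is also no P ∈ GL(4,ℤ) with P·λ₁ = λ₁·P and P·λ₂ = λ₂^τ·P; that is, the lattice ℤ⁴ with the action of G = ⟨λ₁,λ₂⟩ and the lattice ℤ⁴ with the action of G^τ = ⟨λ₁,λ₂^τ⟩ (via the automorphism τ : λ₁ ↦ λ₁, λ₂ ↦ λ₂^τ) are non-isomorphic, and remain non-isomorphic after reduction modulo 2. -/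

import Mathlib

/-- The matrix `λ₁`, a generator of `N₄,₁₃₇ ≅ Q₈ × C₃ ≤ GL(4,ℤ)`. -/
def lam1 : Matrix (Fin 4) (Fin 4) ℤ :=
  !![0,1,0,-1; 0,0,-1,1; -1,0,0,1; 0,1,0,0]

/-- The matrix `λ₂`, the other generator of `N₄,₁₃₇ ≅ Q₈ × C₃ ≤ GL(4,ℤ)`. -/
def lam2 : Matrix (Fin 4) (Fin 4) ℤ :=
  !![0,0,-1,0; -1,-1,-1,2; 1,0,0,0; 0,-1,-1,1]

/-- The matrix `λ₂^τ`, the image of `λ₂` under the automorphism `τ` of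
`G = ⟨λ₁, λ₂⟩` fixing `λ₁`. -/
def lam2tau : Matrix (Fin 4) (Fin 4) ℤ :=
  !![0,1,0,0; -1,0,0,0; -1,-1,-1,2; -1,0,-1,1]

/-- There is no invertible `4 × 4` matrix `P` over `ℤ/2ℤ` with
`P·λ̄₁ = λ̄₁·P` and `P·λ̄₂ = λ̄₂^τ·P` (bars denoting reduction mod 2); consequently there
is also no such `P ∈ GL(4,ℤ)`.  That is, the lattice `ℤ⁴` with the action of
`G = ⟨λ₁,λ₂⟩` and the lattice `ℤ⁴` with the action of `G^τ = ⟨λ₁,λ₂^τ⟩` are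
non-isomorphic, and remain non-isomorphic after reduction modulo 2. -/
lemma map_mul2 (A B : Matrix (Fin 4) (Fin 4) ℤ) :
    (A * B).map (Int.cast : ℤ → ZMod 2) = A.map Int.cast * B.map Int.cast :=
  Matrix.map_mul (f := Int.castRingHom (ZMod 2))

lemma no_intertwiner_mod2 :
    ¬ ∃ P : Matrix (Fin 4) (Fin 4) (ZMod 2), IsUnit P ∧
        P * lam1.map (Int.cast : ℤ → ZMod 2) = lam1.map (Int.cast : ℤ → ZMod 2) * P ∧
        P * lam2.map (Int.cast : ℤ → ZMod 2) = lam2tau.map (Int.cast : ℤ → ZMod 2) * P := by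
  rintro ⟨P, hU, h1, h2⟩
  have htwo : (2 : ZMod 2) = 0 := rfl
  have a00 := congrFun (congrFun h1 0) 0
  have a01 := congrFun (congrFun h1 0) 1
  have a02 := congrFun (congrFun h1 0) 2
  have a03 := congrFun (congrFun h1 0) 3
  have a10 := congrFun (congrFun h1 1) 0
  have a12 := congrFun (congrFun h1 1) 2
  have a13 := congrFun (congrFun h1 1) 3
  have a20 := congrFun (congrFun h1 2) 0
  have a21 := congrFun (congrFun h1 2) 1
  have a30 := congrFun (congrFun h1 3) 0
  have a31 := congrFun (congrFun h1 3) 1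
  have b00 := congrFun (congrFun h2 0) 0
  have b01 := congrFun (congrFun h2 0) 1
  simp [Matrix.mul_apply, Fin.sum_univ_four, lam1, lam2, lam2tau, Matrix.map_apply, Matrix.vecHead, Matrix.vecTail] at a00 a01 a02 a03 a10 a12 a13 a20 a21 a30 a31 b00 b01
  have hrow : P 0 = P 1 := by
    funext j
    fin_cases j
    · show P 0 0 = P 1 0
      linear_combination a01 + a10 + a13 + a21 + a31 + b01 + (P 1 1 - P 2 0 - P 2 3) * htwo + (P 3 1 + P 2 0 + P 2 3 - P 1 0 - P 0 3 - P 1 2) * htwo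
    · show P 0 1 = P 1 1
      linear_combination a00 + a01 + a10 + a12 + a13 + a20 + a21 + a30 + a31 + b00 + b01 + (P 0 1 + 2 * P 1 0 + P 1 1 - P 2 0 + P 3 2 - P 2 3 - P 0 0) * htwo + (-P 0 1 - P 1 0 + P 3 0 - P 1 1 + P 3 1 + P 2 0 - P 3 2 + P 2 3 + P 0 0 - P 0 2 - P 0 3 - P 1 2) * htwo
    · show P 0 2 = P 1 2
      linear_combination a02 + a30 + b00 + (P 1 0 + P 0 1) * htwo + (-2 * P 0 1) * htwo
    · show P 0 3 = P 1 3
      linear_combination a00 + a01 + a03 + a10 + a13 + a21 + (P 1 0 - P 2 0 - P 2 3 - P 0 1) * htwo + (-P 1 0 + P 3 0 + P 3 1 + P 3 3 + P 2 0 + P 2 3 + P 0 1 - P 0 2 - P 0 0 - P 1 2) * htwo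
  have hdet : P.det = 0 :=
    Matrix.det_zero_of_row_eq (i := 0) (j := 1) (by decide) hrow
  have hu := (Matrix.isUnit_iff_isUnit_det P).mp hU
  rw [hdet] at hu
  exact hu.ne_zero rfl

theorem no_intertwiner_Q8C3_twist :
    (¬ ∃ P : Matrix (Fin 4) (Fin 4) (ZMod 2), IsUnit P ∧
        P * lam1.map (Int.cast : ℤ → ZMod 2) = lam1.map (Int.cast : ℤ → ZMod 2) * P ∧
        P * lam2.map (Int.cast : ℤ → ZMod 2) = lam2tau.map (Int.cast : ℤ → ZMod 2) * P) ∧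
    (¬ ∃ P : Matrix (Fin 4) (Fin 4) ℤ, IsUnit P ∧
        P * lam1 = lam1 * P ∧ P * lam2 = lam2tau * P) := by
  refine ⟨no_intertwiner_mod2, ?_⟩
  rintro ⟨P, hU, h1, h2⟩
  exact no_intertwiner_mod2 ⟨P.map (Int.cast : ℤ → ZMod 2),
    (RingHom.mapMatrix (Int.castRingHom (ZMod 2))).isUnit_map hU,
    by rw [← map_mul2, ← map_mul2, h1],
    by rw [← map_mul2, ← map_mul2, h2]⟩
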